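/- Let G be a finitely generated group and let L be a G-recursively enumerable set of patterns over a finite alphabet Σ. Then there exists a set C of pattern codings over Σ, recursively enumerable by a Turing machine with oracle WP(G), such that L = p(C), where p(C) is the set of patterns defined by the consistent pattern codings in C. -/

import Mathlib

open scoped Classical

noncomputable section

namespace SDG

/-! ### Relativized computability -/

/-- Partial recursive functions `ℕ →. ℕ` relative to an oracle `O`. -/
inductive NatPartrecIn (O : ℕ →. ℕ) : (ℕ →. ℕ) → Prop
  | oracle : NatPartrecIn O O
  | zero : NatPartrecIn O (pure 0)
  | succ : NatPartrecIn O Nat.succ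
  | left : NatPartrecIn O ↑fun n : ℕ => n.unpair.1
  | right : NatPartrecIn O ↑fun n : ℕ => n.unpair.2
  | pair {f g} : NatPartrecIn O f → NatPartrecIn O g →
      NatPartrecIn O fun n => Nat.pair <$> f n <*> g n
  | comp {f g} : NatPartrecIn O f → NatPartrecIn O g →
      NatPartrecIn O fun n => g n >>= f
  | prec {f g} : NatPartrecIn O f → NatPartrecIn O g →
      NatPartrecIn O (Nat.unpaired fun a n =>
        n.rec (f a) fun y IH => do let i ← IH; g (Nat.pair a (Nat.pair y i)))
  | rfind {f} : NatPartrecIn O f →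
      NatPartrecIn O fun a => Nat.rfind fun n => (fun m => m = 0) <$> f (Nat.pair a n)

/-- A partial function between `Primcodable` types is partial recursive in the oracle `O`. -/
def PartrecIn (O : ℕ →. ℕ) {α σ : Type} [Primcodable α] [Primcodable σ] (f : α →. σ) : Prop :=
  NatPartrecIn O fun n =>
    Part.bind (Part.ofOption (Encodable.decode (α := α) n)) fun a => (f a).map Encodable.encode

/-- A predicate is recursively enumerable in the oracle `O` if it is the domain of a partial
function recursive in `O`. -/
def RePredIn (O : ℕ →. ℕ) {α : Type} [Primcodable α] (p : α → Prop) : Prop :=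
  PartrecIn O fun a => Part.assert (p a) fun _ => Part.some ()

/-- The characteristic function (as an oracle `ℕ →. ℕ`) of a set `L` of elements of a
`Primcodable` type: on the code of an element of `L` it answers `1`, elsewhere `0`. -/
def charFun {α : Type} [Primcodable α] (L : Set α) : ℕ →. ℕ :=
  fun n => Part.some (if ∃ a ∈ L, Encodable.encode a = n then 1 else 0)

/-! ### Finitely generated groups, words and pattern codings -/

variable {G : Type} [Group G]

/-- The group element represented by a word over the generators `S`. -/
def wordEval {k : ℕ} (S : Fin k → G) (w : List (Fin k)) : G :=
  (w.map S).prod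

/-- `S : Fin k → G` is a finite symmetric generating family containing the identity. -/
def IsGenData {k : ℕ} (S : Fin k → G) : Prop :=
  (∃ i, S i = 1) ∧ (∀ i, ∃ j, S j = (S i)⁻¹) ∧ Subgroup.closure (Set.range S) = ⊤

/-- The word problem of `G` with respect to the generating family `S`. -/
def WP {k : ℕ} (S : Fin k → G) : Set (List (Fin k)) :=
  {w | wordEval S w = 1}

/-- A pattern coding over the alphabet `A`: a finite list of pairs (word, symbol). -/
abbrev PatternCoding (k : ℕ) (A : Type) : Type :=
  List (List (Fin k) × A)

/-- The subshift defined by a set `C` of pattern codings: configurations in which no translate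
of a coded pattern occurs. -/
def XC {k : ℕ} (S : Fin k → G) {A : Type} (C : Set (PatternCoding k A)) : Set (G → A) :=
  {x | ¬ ∃ (g : G) (c : PatternCoding k A), c ∈ C ∧ ∀ p ∈ c, x (g * wordEval S p.1) = p.2}

/-- A set is effectively closed if it is defined by a recursively enumerable set of
pattern codings. -/
def EffectivelyClosed {k : ℕ} (S : Fin k → G) {A : Type} [Primcodable A]
    (X : Set (G → A)) : Prop :=
  ∃ C : Set (PatternCoding k A), REPred (· ∈ C) ∧ X = XC S C

/-- A set is `G`-effectively closed if it is defined by a set of pattern codings which is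
recursively enumerable with oracle the word problem of `G`. -/
def GEffectivelyClosed {k : ℕ} (S : Fin k → G) {A : Type} [Primcodable A]
    (X : Set (G → A)) : Prop :=
  ∃ C : Set (PatternCoding k A), RePredIn (charFun (WP S)) (· ∈ C) ∧ X = XC S C

/-- A pattern coding is consistent if words representing the same group element receive the
same symbol. -/
def Consistent {k : ℕ} (S : Fin k → G) {A : Type} (c : PatternCoding k A) : Prop :=
  ∀ p ∈ c, ∀ q ∈ c, wordEval S p.1 = wordEval S q.1 → p.2 = q.2

/-! ### Subshifts, SFTs, sofic subshifts -/

/-- `X ⊆ A^G` is a subshift: closed (for the product of the discrete topology) and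
shift-invariant. -/
def IsSubshift {A : Type} (X : Set (G → A)) : Prop :=
  (letI : TopologicalSpace A := ⊥; IsClosed X) ∧
    ∀ x ∈ X, ∀ g : G, (fun h => x (g⁻¹ * h)) ∈ X

/-- A pattern with finite support over the alphabet `A`. -/
structure Pattern (G : Type) (A : Type) where
  supp : Finset G
  val : (g : G) → g ∈ supp → A

/-- The pattern `p` occurs in the configuration `x` at position `g`. -/
def PatternOccurs {A : Type} (p : Pattern G A) (x : G → A) (g : G) : Prop :=
  ∀ (h : G) (hh : h ∈ p.supp), x (g * h) = p.val h hh

/-- The subshift defined by a set of forbidden patterns. -/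
def XPat {A : Type} (Fs : Set (Pattern G A)) : Set (G → A) :=
  {x | ¬ ∃ (g : G) (p : Pattern G A), p ∈ Fs ∧ PatternOccurs p x g}

/-- A subshift of finite type: defined by a finite set of forbidden patterns. -/
def IsSFT {A : Type} (X : Set (G → A)) : Prop :=
  ∃ Fs : Set (Pattern G A), Fs.Finite ∧ X = XPat Fs

/-- A witness that `X` is sofic: an SFT `Y` over a finite alphabet `B` together with a factor
code (continuous shift-equivariant surjection) from `Y` onto `X`. -/
structure SoficVia (G : Type) [Group G] {A : Type} (X : Set (G → A)) : Type 1 where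
  B : Type
  finB : Fintype B
  Y : Set (G → B)
  sft : IsSFT Y
  subY : IsSubshift Y
  phi : (G → B) → (G → A)
  cont : letI : TopologicalSpace B := ⊥
         letI : TopologicalSpace A := ⊥
         ContinuousOn phi Y
  equiv : ∀ y ∈ Y, ∀ g : G, phi (fun h => y (g⁻¹ * h)) = fun h => phi y (g⁻¹ * h)
  image : phi '' Y = X

/-- A subshift is sofic if it is the image of an SFT under a factor code. -/
def IsSofic {A : Type} (X : Set (G → A)) : Prop :=
  Nonempty (SoficVia G X)

/-- A factor code from `X` onto `Y`: continuous (discrete product topologies),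
shift-equivariant and surjective. -/
def FactorCode {A B : Type} (X : Set (G → A)) (Y : Set (G → B))
    (φ : (G → A) → (G → B)) : Prop :=
  (letI : TopologicalSpace A := ⊥
   letI : TopologicalSpace B := ⊥
   ContinuousOn φ X) ∧
  (∀ x ∈ X, ∀ g : G, φ (fun h => x (g⁻¹ * h)) = fun h => φ x (g⁻¹ * h)) ∧
  φ '' X = Y

/-- Two subshifts are conjugate if there is a shift-equivariant homeomorphism between them. -/
def Conjugate {A B : Type} (X : Set (G → A)) (Y : Set (G → B)) : Prop :=
  ∃ (φ : (G → A) → (G → B)) (ψ : (G → B) → (G → A)),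
    FactorCode X Y φ ∧ FactorCode Y X ψ ∧
    (∀ x ∈ X, ψ (φ x) = x) ∧ (∀ y ∈ Y, φ (ψ y) = y)

/-- The one-or-less subshift: configurations with at most one occurrence of the symbol `1`
(represented by `true`). -/
def Xle1 (G : Type) : Set (G → Bool) :=
  {x | ∀ g h : G, x g = true → x h = true → g = h}

/-! ### `G`-machines -/

/-- A `G`-machine: finite set of states, finite tape alphabet `A` with a blank symbol, initial
state, accepting states, and a transition function moving with the generators `Fin k`. -/
structure GMachine (k : ℕ) (A : Type) : Type 1 where
  Q : Type
  finQ : Fintype Q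
  blank : A
  q0 : Q
  QF : Set Q
  delta : A × Q → A × Q × Fin k

/-- One step of a `G`-machine in the fixed head model: if `δ(x(1),q) = (a,q',s)` then the new
configuration is `σ_{s⁻¹} x̃` where `x̃` is `x` with the value at `1` replaced by `a`. -/
def GMachine.step {k : ℕ} {A : Type} (M : GMachine k A) (S : Fin k → G) :
    (G → A) × M.Q → (G → A) × M.Q :=
  fun xq =>
    let t := M.delta (xq.1 1, xq.2)
    let xt : G → A := Function.update xq.1 1 t.1
    (fun h => xt (S t.2.2 * h), t.2.1)

/-- The configuration which equals the pattern `p` on its support and `blank` elsewhere. -/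
def Pattern.config {A : Type} (p : Pattern G A) (blank : A) : G → A :=
  fun g => if h : g ∈ p.supp then p.val g h else blank

/-- The `G`-machine `M` accepts the pattern `p` if starting from the configuration `x^p` in the
initial state it eventually reaches an accepting state. -/
def GMachine.Accepts {k : ℕ} {A : Type} (M : GMachine k A) (S : Fin k → G)
    (p : Pattern G A) : Prop :=
  ∃ n : ℕ, ((M.step S)^[n] (p.config M.blank, M.q0)).2 ∈ M.QF

/-- A set of patterns is `G`-recursively enumerable if some `G`-machine accepts exactly its
elements. -/
def GRecEnum {k : ℕ} (S : Fin k → G) {A : Type} (L : Set (Pattern G A)) : Prop :=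
  ∃ M : GMachine k A, ∀ p : Pattern G A, M.Accepts S p ↔ p ∈ L

/-- The consistent pattern coding `c` defines the pattern `p`. -/
def Defines {k : ℕ} (S : Fin k → G) {A : Type} (c : PatternCoding k A)
    (p : Pattern G A) : Prop :=
  (∀ g : G, g ∈ p.supp ↔ ∃ q ∈ c, wordEval S q.1 = g) ∧
  ∀ q ∈ c, ∀ hg : wordEval S q.1 ∈ p.supp, p.val (wordEval S q.1) hg = q.2

/-- `p(C)`: the set of patterns defined by the consistent pattern codings of `C`. -/
def patternsOf {k : ℕ} (S : Fin k → G) {A : Type} (C : Set (PatternCoding k A)) :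
    Set (Pattern G A) :=
  {p | ∃ c ∈ C, Consistent S c ∧ Defines S c p}

/-- A set of patterns is closed by extensions if any pattern extending a pattern of the set
also belongs to the set. -/
def ClosedByExtensions {A : Type} (L : Set (Pattern G A)) : Prop :=
  ∀ (p₁ p₂ : Pattern G A) (hsub : p₁.supp ⊆ p₂.supp),
    (∀ (g : G) (hg : g ∈ p₁.supp), p₂.val g (hsub hg) = p₁.val g hg) →
    p₁ ∈ L → p₂ ∈ L

/-! ### Balls, ends, amenability -/

/-- The ball of radius `n` in the word metric given by `S`. -/
def ballS {k : ℕ} (S : Fin k → G) (n : ℕ) : Set G :=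
  {x | ∃ w : List (Fin k), w.length ≤ n ∧ wordEval S w = x}

/-- Adjacency in the Cayley graph restricted to the set `V`. -/
def Adj {k : ℕ} (S : Fin k → G) (V : Set G) (a b : G) : Prop :=
  a ∈ V ∧ b ∈ V ∧ ∃ i, a * S i = b

/-- Reachability inside `V` in the Cayley graph of `(G,S)`. -/
def Reach {k : ℕ} (S : Fin k → G) (V : Set G) (a b : G) : Prop :=
  Relation.ReflTransGen (Adj S V) a b

/-- `G` has at least two ends: for some `n`, the complement of the ball of radius `n` in the
Cayley graph has at least two infinite connected components. -/
def HasTwoOrMoreEnds {k : ℕ} (S : Fin k → G) : Prop :=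
  ∃ (n : ℕ) (x y : G), x ∉ ballS S n ∧ y ∉ ballS S n ∧
    {z | Reach S (ballS S n)ᶜ x z}.Infinite ∧
    {z | Reach S (ballS S n)ᶜ y z}.Infinite ∧
    ¬ Reach S (ballS S n)ᶜ x y

/-- The Følner condition: `G` is amenable. -/
def FolnerAmenable (G : Type) [Group G] : Prop :=
  ∀ (K : Finset G) (ε : ℝ), 0 < ε →
    ∃ F : Finset G, F.Nonempty ∧ ∀ k ∈ K,
      ((F \ F.image (fun x => x * k)).card : ℝ) < ε * F.card

/-! ### `G × ℤ`, presentations, hardness and the domino problems -/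

/-- Generators of `G × ℤ`: the generators of `G` paired with `0`, together with `(1,±1)`. -/
def prodGens {k : ℕ} (S : Fin k → G) : Fin (k + 2) → G × Multiplicative ℤ :=
  fun i =>
    if h : (i : ℕ) < k then (S ⟨i, h⟩, 1)
    else if (i : ℕ) = k then (1, Multiplicative.ofAdd 1)
    else (1, Multiplicative.ofAdd (-1))

/-- The element of the free group over the generator indices represented by a word. -/
def freeWord {k : ℕ} (w : List (Fin k)) : FreeGroup (Fin k) :=
  (w.map FreeGroup.of).prod

/-- `G` is recursively presented with respect to `S`: there is a recursively enumerable set of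
relators (words over the generators) whose normal closure in the free group over the
generator indices is the kernel of the evaluation map. -/
def RecursivelyPresented {k : ℕ} (S : Fin k → G) : Prop :=
  ∃ R : Set (List (Fin k)), REPred (· ∈ R) ∧
    MonoidHom.ker (FreeGroup.lift S) = Subgroup.normalClosure (freeWord '' R)

/-- `L` is hard for the class of predicates recursively enumerable in the oracle `O`
(equivalently, hard for the halting problem of machines with oracle `O`): every
such predicate many-one reduces to `L` via a computable function. -/
def OracleREHard {α : Type} [Primcodable α] (O : ℕ →. ℕ) (L : Set α) : Prop :=
  ∀ p : ℕ → Prop, RePredIn O p → ∃ f : ℕ → α, Computable f ∧ ∀ n, p n ↔ f n ∈ L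

/-- The domino problem of `(K,T)`: pairs `(N, F)` of an alphabet size and a finite list of
pattern codings over `ℕ` such that no configuration with symbols `< N` avoids `F`. -/
def DP {K : Type} [Group K] {m : ℕ} (T : Fin m → K) : Set (ℕ × List (PatternCoding m ℕ)) :=
  {q | ¬ ∃ x : K → ℕ, (∀ g, x g < q.1) ∧ x ∈ XC T {c | c ∈ q.2}}

/-- The origin constrained domino problem of `(K,T)`: triples `((N,a),F)` such that no
configuration with symbols `< N` and the symbol `a` at the origin avoids `F`. -/
def OCDP {K : Type} [Group K] {m : ℕ} (T : Fin m → K) :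
    Set ((ℕ × ℕ) × List (PatternCoding m ℕ)) :=
  {q | ¬ ∃ x : K → ℕ, (∀ g, x g < q.1.1) ∧ x 1 = q.1.2 ∧ x ∈ XC T {c | c ∈ q.2}}

namespace NatPartrecIn
variable {O : ℕ →. ℕ}

theorem of_eq {f g : ℕ →. ℕ} (h : NatPartrecIn O f) (H : ∀ n, f n = g n) : NatPartrecIn O g :=
  (funext H : f = g) ▸ h

theorem of_partrec {f : ℕ →. ℕ} (h : Nat.Partrec f) : NatPartrecIn O f := by
  induction h with
  | zero => exact .zero
  | succ => exact .succ
  | left => exact .left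
  | right => exact .right
  | pair _ _ ihf ihg => exact .pair ihf ihg
  | comp _ _ ihf ihg => exact .comp ihf ihg
  | prec _ _ ihf ihg => exact .prec ihf ihg
  | rfind _ ih => exact .rfind ih

theorem of_primrec {f : ℕ → ℕ} (h : Primrec f) : NatPartrecIn O f :=
  of_partrec (Partrec.nat_iff.1 h.to_comp)

/-- Compose a `NatPartrecIn` function with a total computable function (pre-composition). -/
theorem comp_total {f : ℕ →. ℕ} (hf : NatPartrecIn O f) {g : ℕ → ℕ} (hg : Primrec g) :
    NatPartrecIn O fun n => f (g n) :=
  (NatPartrecIn.comp hf (of_primrec hg)).of_eq fun n => by exact Part.bind_some _ _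

/-- Post-compose with a total computable function. -/
theorem total_comp {f : ℕ →. ℕ} (hf : NatPartrecIn O f) {g : ℕ → ℕ} (hg : Primrec g) :
    NatPartrecIn O fun n => (f n).map g :=
  (NatPartrecIn.comp (of_primrec hg) hf).of_eq fun n => by
    show Part.bind (f n) _ = _
    rw [← Part.bind_some_eq_map]
    rfl

end NatPartrecIn

/-! ### The table of oracle answers -/

/-- Answers of the (total) oracle with values `ω` on `m-1, m-2, ..., 0`. -/
def oListR (ω : ℕ → ℕ) (m : ℕ) : List ℕ :=
  ((List.range m).map ω).reverse

theorem oListR_succ (ω : ℕ → ℕ) (m : ℕ) : oListR ω (m + 1) = ω m :: oListR ω m := by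
  simp [oListR, List.range_succ]

theorem oListR_reverse_getD (ω : ℕ → ℕ) (m q : ℕ) :
    (oListR ω m).reverse.getD q 2 = if q < m then ω q else 2 := by
  simp only [oListR, List.reverse_reverse]
  rcases lt_or_ge q m with h | h
  · rw [List.getD_eq_getElem?_getD]
    simp [List.getElem?_map, List.getElem?_range h, h]
  · rw [List.getD_eq_default]
    · simp [Nat.not_lt.2 h]
    · simpa using h

theorem NatPartrecIn.tab {ω : ℕ → ℕ} :
    NatPartrecIn (fun n => Part.some (ω n)) fun m => Part.some (Encodable.encode (oListR ω m)) := by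
  set O : ℕ →. ℕ := fun n => Part.some (ω n) with hO
  have h1 : NatPartrecIn O fun z => O z.unpair.2.unpair.1 :=
    NatPartrecIn.oracle.comp_total
      ((Primrec.fst.comp .unpair).comp (Primrec.snd.comp .unpair))
  have h2 : NatPartrecIn O ↑(fun z : ℕ => z.unpair.2.unpair.2) :=
    of_primrec ((Primrec.snd.comp .unpair).comp (Primrec.snd.comp .unpair))
  have hp : NatPartrecIn O fun z => Nat.pair <$> O z.unpair.2.unpair.1 <*>
      (fun z : ℕ => z.unpair.2.unpair.2) z := h1.pair h2
  have hg : NatPartrecIn O fun z =>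
      (Nat.pair <$> O z.unpair.2.unpair.1 <*> (fun z : ℕ => z.unpair.2.unpair.2) z) >>=
        (Nat.succ : ℕ →. ℕ) := NatPartrecIn.comp .succ hp
  have hF := NatPartrecIn.prec (f := pure 0) .zero hg
  have key : ∀ m : ℕ,
      (Nat.unpaired (fun a n =>
        n.rec ((pure 0 : ℕ →. ℕ) a) fun y IH => do
          let i ← IH
          (fun z =>
            (Nat.pair <$> O z.unpair.2.unpair.1 <*> (fun z : ℕ => z.unpair.2.unpair.2) z) >>=
              (Nat.succ : ℕ →. ℕ)) (Nat.pair a (Nat.pair y i))) (Nat.pair 0 m) : Part ℕ)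
        = Part.some (Encodable.encode (oListR ω m)) := by
    intro m
    induction m with
    | zero =>
      simp only [Nat.unpaired, Nat.unpair_pair, oListR, List.range_zero, List.map_nil,
        List.reverse_nil, Encodable.encode_list_nil]
      rfl
    | succ m ih =>
      simp only [Nat.unpaired, Nat.unpair_pair] at ih ⊢
      rw [ih]
      simp [hO, Nat.unpair_pair, Seq.seq, oListR_succ, Encodable.encode_list_cons, Nat.succ_eq_add_one]
      exact Part.bind_some _ _
  exact (hF.comp_total (g := fun m => Nat.pair 0 m)
    (Primrec₂.natPair.comp (Primrec.const 0) Primrec.id)).of_eq key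


/-! ### Words and generators -/

section Words
variable {k : ℕ} (S : Fin k → G)

theorem wordEval_nil : wordEval S ([] : List (Fin k)) = 1 := rfl

theorem wordEval_cons (i : Fin k) (w : List (Fin k)) :
    wordEval S (i :: w) = S i * wordEval S w := by simp [wordEval]

theorem wordEval_append (u v : List (Fin k)) :
    wordEval S (u ++ v) = wordEval S u * wordEval S v := by simp [wordEval]

variable (ι : Fin k → Fin k)

/-- Formal inverse of a word, given a table of inverses of the generators. -/
def wInv (w : List (Fin k)) : List (Fin k) := (w.map ι).reverse

theorem wordEval_wInv (hι : ∀ i, S (ι i) = (S i)⁻¹) (w : List (Fin k)) :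
    wordEval S (wInv ι w) = (wordEval S w)⁻¹ := by
  induction w with
  | nil => simp [wInv, wordEval]
  | cons i w ih =>
    have : wInv ι (i :: w) = wInv ι w ++ [ι i] := by simp [wInv]
    rw [this, wordEval_append, ih, wordEval_cons, wordEval_cons, wordEval_nil, hι,
      mul_one, mul_inv_rev]

theorem exists_word (hS : IsGenData S) (g : G) : ∃ w, wordEval S w = g := by
  obtain ⟨-, hsym, hcl⟩ := hS
  choose ι hι using hsym
  let H : Subgroup G :=
    { carrier := {g | ∃ w, wordEval S w = g}
      one_mem' := ⟨[], rfl⟩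
      mul_mem' := by
        rintro a b ⟨u, hu⟩ ⟨v, hv⟩
        exact ⟨u ++ v, by rw [wordEval_append, hu, hv]⟩
      inv_mem' := by
        rintro a ⟨w, hw⟩
        exact ⟨wInv ι w, by rw [wordEval_wInv S ι hι, hw]⟩ }
  have hsub : Set.range S ⊆ ↑H := by
    rintro x ⟨i, rfl⟩
    exact ⟨[i], by rw [wordEval_cons, wordEval_nil, mul_one]⟩
  have : (⊤ : Subgroup G) ≤ H := hcl ▸ (Subgroup.closure_le H).2 hsub
  exact this (Subgroup.mem_top g)

end Words

/-! ### Simulation of a `G`-machine -/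

section Sim
variable {k : ℕ} {A : Type}

/-- Leftmost-priority lookup in a list by a boolean predicate. -/
def findB (p : List (Fin k) × A → Bool) (tape : List (List (Fin k) × A)) : Option A :=
  tape.foldr (fun e r => bif p e then some e.2 else r) none

theorem findB_congr {p q : List (Fin k) × A → Bool} {tape : List (List (Fin k) × A)}
    (h : ∀ e ∈ tape, p e = q e) : findB p tape = findB q tape := by
  induction tape with
  | nil => rfl
  | cons e l ih =>
    simp only [findB, List.foldr_cons] at *
    rw [h e (List.mem_cons_self), ih fun x hx => h x (List.mem_cons_of_mem e hx)]

theorem findB_eq_none {p : List (Fin k) × A → Bool} {tape : List (List (Fin k) × A)} :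
    findB p tape = none ↔ ∀ e ∈ tape, p e = false := by
  induction tape with
  | nil => simp [findB]
  | cons e l ih =>
    simp only [findB, List.foldr_cons] at *
    cases he : p e <;> simp [he, ih]

theorem findB_eq_some {p : List (Fin k) × A → Bool} {tape : List (List (Fin k) × A)} {a : A}
    (h : findB p tape = some a) : ∃ e ∈ tape, p e = true ∧ e.2 = a := by
  induction tape with
  | nil => simp [findB] at h
  | cons e l ih =>
    simp only [findB, List.foldr_cons] at h
    cases he : p e
    · rw [he, cond_false] at h
      obtain ⟨e', he', hp, hv⟩ := ih h
      exact ⟨e', List.mem_cons_of_mem e he', hp, hv⟩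
    · rw [he, cond_true] at h
      exact ⟨e, List.mem_cons_self, he, by injection h⟩

variable [Fintype A] (S : Fin k → G) (M : GMachine k A)

/-- Number of states. -/
def NQ : ℕ := @Fintype.card M.Q M.finQ

/-- Equivalence of states with an initial segment of `ℕ`. -/
def eQ : M.Q ≃ Fin (NQ M) := @Fintype.equivFin M.Q M.finQ

/-- State of the simulation: tape (list of words with symbols), head (a word), machine state. -/
abbrev SimSt := List (List (Fin k) × A) × List (Fin k) × Fin (NQ M)

/-- Transition table transported to `Fin (NQ M)`. -/
def dstep (p : A × Fin (NQ M)) : A × Fin (NQ M) × Fin k :=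
  ((M.delta (p.1, (eQ M).symm p.2)).1, eQ M (M.delta (p.1, (eQ M).symm p.2)).2.1,
    (M.delta (p.1, (eQ M).symm p.2)).2.2)

/-- Acceptance test on transported states. -/
def qfB (i : Fin (NQ M)) : Bool := decide ((eQ M).symm i ∈ M.QF)

/-- Lookup the symbol at an (absolute) position `g`, default blank. -/
def lookA (tape : List (List (Fin k) × A)) (g : G) : A :=
  (findB (fun e => decide (wordEval S e.1 = g)) tape).getD M.blank

/-- One step of the idealized simulation. -/
def pstep (s : SimSt M) : SimSt M :=
  let r := dstep M (lookA S M s.1 (wordEval S s.2.1), s.2.2)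
  ((s.2.1, r.1) :: s.1, s.2.1 ++ [r.2.2], r.2.1)

/-- The idealized simulation of the `G`-machine on a pattern coding. -/
def sim (c : PatternCoding k A) (n : ℕ) : SimSt M :=
  n.rec (c, [], eQ M M.q0) fun _ s => pstep S M s

theorem sim_succ (c : PatternCoding k A) (n : ℕ) :
    sim S M c (n + 1) = pstep S M (sim S M c n) := rfl

theorem lookA_config {c : PatternCoding k A} {p : Pattern G A}
    (hc : Consistent S c) (hd : Defines S c p) (g : G) :
    lookA S M c g = p.config M.blank g := by
  unfold lookA Pattern.config
  by_cases hg : g ∈ p.supp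
  · obtain ⟨q, hq, hqe⟩ := (hd.1 g).1 hg
    rcases hf : findB (fun e => decide (wordEval S e.1 = g)) c with - | a
    · rw [findB_eq_none] at hf
      have := hf q hq
      simp [hqe] at this
    · obtain ⟨e, he, hpe, hv⟩ := findB_eq_some hf
      have hee : wordEval S e.1 = g := by simpa using hpe
      have := hd.2 e he (hee ▸ hg)
      rw [dif_pos hg, Option.getD_some, ← hv, ← this]
      congr 1
  · have hf : findB (fun e => decide (wordEval S e.1 = g)) c = none := by
      rw [findB_eq_none]
      intro e he
      by_contra hne
      simp only [Bool.not_eq_false, decide_eq_true_eq] at hne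
      exact hg ((hd.1 g).2 ⟨e, he, hne⟩)
    rw [hf, dif_neg hg, Option.getD_none]

/-- Correctness of the idealized simulation. -/
theorem sim_spec {c : PatternCoding k A} {p : Pattern G A}
    (hc : Consistent S c) (hd : Defines S c p) (n : ℕ) :
    (sim S M c n).2.2 = eQ M ((M.step S)^[n] (p.config M.blank, M.q0)).2 ∧
      ∀ g : G, ((M.step S)^[n] (p.config M.blank, M.q0)).1 g
        = lookA S M (sim S M c n).1 (wordEval S (sim S M c n).2.1 * g) := by
  induction n with
  | zero =>
    refine ⟨rfl, fun g => ?_⟩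
    simp only [Function.iterate_zero, id]
    rw [show (sim S M c 0).2.1 = ([] : List (Fin k)) from rfl, wordEval_nil, one_mul]
    exact (lookA_config S M hc hd g).symm
  | succ n ih =>
    obtain ⟨ih1, ih2⟩ := ih
    set st := (M.step S)^[n] (p.config M.blank, M.q0) with hst
    set ss := sim S M c n with hss
    have hread : lookA S M ss.1 (wordEval S ss.2.1) = st.1 1 := by
      have := ih2 1
      rw [mul_one] at this
      exact this.symm
    have hr : dstep M (lookA S M ss.1 (wordEval S ss.2.1), ss.2.2)
        = ((M.delta (st.1 1, st.2)).1, eQ M (M.delta (st.1 1, st.2)).2.1,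
           (M.delta (st.1 1, st.2)).2.2) := by
      rw [hread, ih1]
      simp [dstep]
    rw [Function.iterate_succ_apply', sim_succ]
    set t := M.delta (st.1 1, st.2) with ht
    have hstep : M.step S st = (fun h => Function.update st.1 1 t.1 (S t.2.2 * h), t.2.1) := rfl
    constructor
    · rw [hstep]
      show (pstep S M ss).2.2 = eQ M t.2.1
      simp only [pstep, hr]
    · intro g
      rw [hstep]
      show Function.update st.1 1 t.1 (S t.2.2 * g)
        = lookA S M (pstep S M ss).1 (wordEval S (pstep S M ss).2.1 * g)
      have h1 : (pstep S M ss).1 = (ss.2.1, t.1) :: ss.1 := by simp only [pstep, hr]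
      have h2 : (pstep S M ss).2.1 = ss.2.1 ++ [t.2.2] := by simp only [pstep, hr]
      rw [h1, h2, wordEval_append, wordEval_cons, wordEval_nil, mul_one]
      unfold lookA findB
      simp only [List.foldr_cons]
      rw [Function.update_apply]
      by_cases hone : S t.2.2 * g = 1
      · have : wordEval S ss.2.1 = wordEval S ss.2.1 * S t.2.2 * g := by
          rw [mul_assoc, hone, mul_one]
        rw [if_pos hone, ← this, decide_eq_true rfl]
        rfl
      · have hne : (decide (wordEval S ss.2.1 = wordEval S ss.2.1 * S t.2.2 * g)) = false := by
          simp only [decide_eq_false_iff_not]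
          intro hcontra
          apply hone
          have h' : wordEval S ss.2.1 * 1 = wordEval S ss.2.1 * (S t.2.2 * g) := by
            rw [mul_one, ← mul_assoc, ← hcontra]
          exact (mul_left_cancel h').symm
        rw [if_neg hone, hne, cond_false, ih2 (S t.2.2 * g), mul_assoc]
        rfl

/-! ### The table-driven simulation -/

/-- Truth values of the word-problem oracle. -/
def wpω : ℕ → ℕ := fun n => if ∃ a ∈ WP S, Encodable.encode a = n then 1 else 0

theorem charFun_WP_eq : charFun (WP S) = fun n => Part.some (wpω S n) := rfl

theorem wpω_ne_two (i : ℕ) : wpω S i ≠ 2 := by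
  unfold wpω; split <;> simp

variable (ι : Fin k → Fin k)

/-- Index of the query comparing the group elements of two words. -/
def qIdx (w h : List (Fin k)) : ℕ := Encodable.encode (wInv ι w ++ h)

/-- Answer from a table, `2` meaning unknown. -/
def tAns (t : List ℕ) (q : ℕ) : ℕ := t.reverse.getD q 2

theorem qIdx_truth (hι : ∀ i, S (ι i) = (S i)⁻¹) (w h : List (Fin k)) :
    (wpω S (qIdx ι w h) == 1) = decide (wordEval S w = wordEval S h) := by
  have hiff : (∃ a ∈ WP S, Encodable.encode a = qIdx ι w h) ↔ wordEval S w = wordEval S h := by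
    constructor
    · rintro ⟨a, ha, he⟩
      have : a = wInv ι w ++ h := Encodable.encode_injective he
      subst this
      have := ha
      simp only [WP, Set.mem_setOf_eq, wordEval_append, wordEval_wInv S ι hι] at this
      exact (inv_mul_eq_one.1 this).symm ▸ rfl
    · intro hwh
      refine ⟨wInv ι w ++ h, ?_, rfl⟩
      simp only [WP, Set.mem_setOf_eq, wordEval_append, wordEval_wInv S ι hι, hwh,
        inv_mul_cancel]
  by_cases hq : wordEval S w = wordEval S h
  · simp [wpω, hiff.2 hq, hq]
  · have : ¬ ∃ a ∈ WP S, Encodable.encode a = qIdx ι w h := fun hx => hq (hiff.1 hx)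
    simp [wpω, this, hq]

/-- In-range check for all queries of one simulation step. -/
def okB (t : List ℕ) (h : List (Fin k)) (tape : List (List (Fin k) × A)) : Bool :=
  tape.foldr (fun e b => b && !(tAns t (qIdx ι e.1 h) == 2)) true

theorem okB_iff {t : List ℕ} {h : List (Fin k)} {tape : List (List (Fin k) × A)} :
    okB ι t h tape = true ↔ ∀ e ∈ tape, tAns t (qIdx ι e.1 h) ≠ 2 := by
  induction tape with
  | nil => simp [okB]
  | cons e l ih =>
    simp only [okB, List.foldr_cons, Bool.and_eq_true, List.mem_cons] at *
    rw [ih]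
    constructor
    · rintro ⟨h1, h2⟩ x (rfl | hx)
      · simpa using h2
      · exact h1 x hx
    · intro hx
      refine ⟨fun x hx' => hx x (Or.inr hx'), by simpa using hx e (Or.inl rfl)⟩

/-- One step of the table-driven simulation; `none` means the simulation aborted because of
an out-of-range query. -/
def tstep (t : List ℕ) (x : Option (SimSt M) × Bool) : Option (SimSt M) × Bool :=
  match x.1 with
  | none => (none, x.2)
  | some s =>
    bif okB ι t s.2.1 s.1 then
      let a0 := (findB (fun e => tAns t (qIdx ι e.1 s.2.1) == 1) s.1).getD M.blank
      let r := dstep M (a0, s.2.2)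
      (some ((s.2.1, r.1) :: s.1, s.2.1 ++ [r.2.2], r.2.1), x.2 || qfB M r.2.1)
    else (none, x.2)

/-- The table-driven simulation. -/
def runT (t : List ℕ) (c : PatternCoding k A) (n : ℕ) : Option (SimSt M) × Bool :=
  n.rec (some (c, [], eQ M M.q0), qfB M (eQ M M.q0)) fun _ x => tstep M ι t x

theorem runT_succ (t : List ℕ) (c : PatternCoding k A) (n : ℕ) :
    runT M ι t c (n + 1) = tstep M ι t (runT M ι t c n) := rfl

theorem tstep_none (t : List ℕ) (b : Bool) :
    tstep M ι t (none, b) = (none, b) := rfl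

theorem tstep_abort (t : List ℕ) (s : SimSt M) (b : Bool)
    (hok : okB ι t s.2.1 s.1 = false) : tstep M ι t (some s, b) = (none, b) := by
  simp [tstep, hok]

theorem tstep_some (hι : ∀ i, S (ι i) = (S i)⁻¹) {t : List ℕ}
    (hgood : ∀ i, tAns t i ≠ 2 → tAns t i = wpω S i) (s : SimSt M) (b : Bool)
    (hok : okB ι t s.2.1 s.1 = true) :
    tstep M ι t (some s, b) = (some (pstep S M s), b || qfB M (pstep S M s).2.2) := by
  have hq : ∀ e ∈ s.1, tAns t (qIdx ι e.1 s.2.1) ≠ 2 := (okB_iff ι).1 hok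
  have hfind : findB (fun e => tAns t (qIdx ι e.1 s.2.1) == 1) s.1
      = findB (fun e => decide (wordEval S e.1 = wordEval S s.2.1)) s.1 := by
    apply findB_congr
    intro e he
    rw [hgood _ (hq e he), qIdx_truth S ι hι]
  simp only [tstep, hok, cond_true]
  rw [hfind]
  rfl

theorem tstep_flag_mono (t : List ℕ) (x : Option (SimSt M) × Bool) (hx : x.2 = true) :
    (tstep M ι t x).2 = true := by
  rcases x with ⟨os, b⟩
  cases hx
  rcases os with - | s
  · rfl
  · cases hok : okB ι t s.2.1 s.1 <;> simp [tstep, hok]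

theorem runT_flag_mono (t : List ℕ) (c : PatternCoding k A) {n n' : ℕ} (h : n ≤ n')
    (hf : (runT M ι t c n).2 = true) : (runT M ι t c n').2 = true := by
  induction n' with
  | zero => exact (Nat.le_zero.1 h) ▸ hf
  | succ n' ih =>
    rcases Nat.lt_or_ge n (n' + 1) with h' | h'
    · exact tstep_flag_mono M ι t _ (ih (Nat.lt_succ_iff.1 h'))
    · exact (Nat.le_antisymm h h') ▸ hf

/-- Soundness of the table-driven simulation with respect to the idealized one. -/
theorem runT_sound (hι : ∀ i, S (ι i) = (S i)⁻¹) {t : List ℕ}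
    (hgood : ∀ i, tAns t i ≠ 2 → tAns t i = wpω S i) (c : PatternCoding k A) (n : ℕ) :
    ((runT M ι t c n).1 = none ∨ (runT M ι t c n).1 = some (sim S M c n)) ∧
      ((runT M ι t c n).2 = true → ∃ j, qfB M ((sim S M c j).2.2) = true) := by
  induction n with
  | zero => exact ⟨Or.inr rfl, fun hf => ⟨0, hf⟩⟩
  | succ n ih =>
    obtain ⟨ih1, ih2⟩ := ih
    rw [runT_succ]
    rcases hx : runT M ι t c n with ⟨os, b⟩
    rw [hx] at ih1 ih2
    rcases ih1 with h1 | h1 <;> simp only at h1 <;> subst h1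
    · exact ⟨Or.inl rfl, fun hf => ih2 (by simpa [tstep] using hf)⟩
    · by_cases hok : okB ι t (sim S M c n).2.1 (sim S M c n).1
      · rw [tstep_some S M ι hι hgood _ _ hok]
        refine ⟨Or.inr (by rw [sim_succ]), fun hf => ?_⟩
        rcases Bool.or_eq_true_iff.1 (by simpa using hf) with hb | hb
        · exact ih2 hb
        · exact ⟨n + 1, by rw [sim_succ]; exact hb⟩
      · rw [tstep_abort M ι t _ _ (by simpa using hok)]
        exact ⟨Or.inl rfl, ih2⟩

theorem runT_flag_catch {t : List ℕ} {c : PatternCoding k A} {n : ℕ} {s : SimSt M}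
    (h1 : (runT M ι t c n).1 = some s) (h2 : qfB M s.2.2 = true) :
    (runT M ι t c n).2 = true := by
  cases n with
  | zero =>
    have : s = (c, [], eQ M M.q0) := by
      have := h1
      simp only [runT] at this
      exact (Option.some_injective _ this).symm
    rw [this] at h2
    exact h2
  | succ n =>
    rw [runT_succ] at h1 ⊢
    generalize hx : runT M ι t c n = x at h1 ⊢
    rcases x with ⟨os, b⟩
    rcases os with - | s'
    · simp [tstep] at h1
    · by_cases hok : okB ι t s'.2.1 s'.1
      · simp only [tstep, hok, cond_true] at h1 ⊢
        have hs : s = (_, _, _) := (Option.some_injective _ h1).symm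
        rw [hs] at h2
        simp only at h2 ⊢
        rw [h2, Bool.or_true]
      · rw [tstep_abort M ι t _ _ (by simpa using hok)] at h1
        simp at h1


theorem le_foldr_max (l : List ℕ) {x : ℕ} (hx : x ∈ l) : x ≤ l.foldr max 0 := by
  induction l with
  | nil => simp at hx
  | cons a l ih =>
    rcases List.mem_cons.1 hx with rfl | hx'
    · exact le_max_left _ _
    · exact le_trans (ih hx') (le_max_right _ _)

theorem tAns_oListR (ω : ℕ → ℕ) (m q : ℕ) :
    tAns (oListR ω m) q = if q < m then ω q else 2 :=
  oListR_reverse_getD ω m q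

theorem oListR_good (m : ℕ) :
    ∀ i, tAns (oListR (wpω S) m) i ≠ 2 → tAns (oListR (wpω S) m) i = wpω S i := by
  intro i hi
  rw [tAns_oListR] at hi ⊢
  rcases lt_or_ge i m with h | h
  · rw [if_pos h]
  · exact absurd (if_neg (Nat.not_lt.2 h)) hi

/-- Completeness: a large enough table lets the table-driven simulation follow the idealized
one. -/
theorem runT_complete (hι : ∀ i, S (ι i) = (S i)⁻¹) (c : PatternCoding k A) (n : ℕ) :
    ∃ m, n ≤ m ∧ ∀ j ≤ n,
      (runT M ι (oListR (wpω S) m) c j).1 = some (sim S M c j) := by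
  classical
  set K := (List.range (n + 1)).flatMap
    (fun j => ((sim S M c j).1).map fun e => qIdx ι e.1 (sim S M c j).2.1) with hK
  refine ⟨max (K.foldr max 0 + 1) n, le_max_right _ _, ?_⟩
  set m := max (K.foldr max 0 + 1) n with hm
  have hKm : ∀ x ∈ K, x < m := fun x hx =>
    lt_of_lt_of_le (Nat.lt_succ_of_le (le_foldr_max K hx)) (le_max_left _ _)
  intro j hj
  induction j with
  | zero => rfl
  | succ j ih =>
    have hj' : j ≤ n := le_trans (Nat.le_succ j) hj
    have ihj := ih hj'
    have hok : okB ι (oListR (wpω S) m) (sim S M c j).2.1 (sim S M c j).1 = true := by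
      rw [okB_iff]
      intro e he
      have hxK : qIdx ι e.1 (sim S M c j).2.1 ∈ K := by
        rw [hK]
        exact List.mem_flatMap.2 ⟨j, List.mem_range.2 (Nat.lt_succ_of_le hj'),
          List.mem_map.2 ⟨e, he, rfl⟩⟩
      rw [tAns_oListR, if_pos (hKm _ hxK)]
      exact wpω_ne_two S _
    rw [runT_succ]
    generalize hx : runT M ι (oListR (wpω S) m) c j = x at ihj ⊢
    rcases x with ⟨os, b⟩
    simp only at ihj
    subst ihj
    rw [tstep_some S M ι hι (oListR_good S m) _ _ hok, sim_succ]

/-- The acceptance test: run the simulation for `m` steps with the table of the first `m`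
oracle answers. -/
def accT (c : PatternCoding k A) (m : ℕ) : Bool :=
  (runT M ι (oListR (wpω S) m) c m).2

theorem accT_iff (hι : ∀ i, S (ι i) = (S i)⁻¹) {c : PatternCoding k A} {p : Pattern G A}
    (hc : Consistent S c) (hd : Defines S c p) :
    (∃ m, accT S M ι c m = true) ↔ M.Accepts S p := by
  have hqf : ∀ j, (qfB M ((sim S M c j).2.2) = true ↔
      ((M.step S)^[j] (p.config M.blank, M.q0)).2 ∈ M.QF) := by
    intro j
    rw [(sim_spec S M hc hd j).1]
    simp [qfB]
  constructor
  · rintro ⟨m, hm⟩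
    obtain ⟨j, hj⟩ := (runT_sound S M ι hι (oListR_good S m) c m).2 hm
    exact ⟨j, (hqf j).1 hj⟩
  · rintro ⟨n, hn⟩
    obtain ⟨m, hnm, hrun⟩ := runT_complete S M ι hι c n
    have hflag := runT_flag_catch M ι (hrun n le_rfl) ((hqf n).2 hn)
    exact ⟨m, runT_flag_mono M ι _ c hnm hflag⟩

/-- The set of pattern codings accepted by the simulation. -/
def Cset : Set (PatternCoding k A) := {c | ∃ m, accT S M ι c m = true}

theorem patternsOf_Cset (hS : IsGenData S) (hι : ∀ i, S (ι i) = (S i)⁻¹)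
    {L : Set (Pattern G A)} (hL : ∀ p : Pattern G A, M.Accepts S p ↔ p ∈ L) :
    patternsOf S (Cset S M ι) = L := by
  ext p
  constructor
  · rintro ⟨c, hcC, hc, hd⟩
    exact (hL p).1 ((accT_iff S M ι hι hc hd).1 hcC)
  · intro hp
    classical
    set rep : G → List (Fin k) := fun g => Classical.choose (exists_word S hS g) with hrepd
    have hrep : ∀ g, wordEval S (rep g) = g := fun g => Classical.choose_spec (exists_word S hS g)
    set c : PatternCoding k A :=
      p.supp.attach.toList.map (fun g => (rep g.1, p.val g.1 g.2)) with hcd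
    have hc : Consistent S c := by
      rintro q hq q' hq' heq
      obtain ⟨⟨g, hg⟩, -, rfl⟩ := List.mem_map.1 hq
      obtain ⟨⟨g', hg'⟩, -, rfl⟩ := List.mem_map.1 hq'
      simp only at heq ⊢
      rw [hrep, hrep] at heq
      subst heq
      rfl
    have hd : Defines S c p := by
      constructor
      · intro g
        constructor
        · intro hg
          refine ⟨(rep g, p.val g hg), ?_, hrep g⟩
          rw [hcd]
          exact List.mem_map.2 ⟨⟨g, hg⟩, by simp [Finset.mem_toList], rfl⟩
        · rintro ⟨q, hq, rfl⟩
          obtain ⟨⟨g, hg⟩, -, rfl⟩ := List.mem_map.1 hq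
          simpa only [hrep] using hg
      · intro q hq
        obtain ⟨⟨g, hg⟩, -, rfl⟩ := List.mem_map.1 hq
        simp only
        intro hgg
        revert hgg
        rw [hrep]
        intro hgg
        rfl
    exact ⟨c, (accT_iff S M ι hι hc hd).2 ((hL p).2 hp), hc, hd⟩
end Sim

/-! ### Computability of the table-driven simulation -/

section Comp
variable {k : ℕ} {A : Type} [Fintype A] [Primcodable A] (M : GMachine k A) (ι : Fin k → Fin k)

open Primrec in
theorem primrec_tstep :
    Primrec fun w : List ℕ × (Option (SimSt M) × Bool) => tstep M ι w.1 w.2 := by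
  have htAns : Primrec₂ tAns :=
    ((Primrec.list_getD (2 : ℕ)).comp (list_reverse.comp fst) snd).to₂
  have hqIdx : Primrec₂ (qIdx ι) :=
    (Primrec.encode.comp (Primrec.list_append.comp
      (list_reverse.comp (list_map fst (((dom_finite ι).comp snd).to₂)))
      snd)).to₂
  -- in-range check
  have hok : Primrec (fun y : List ℕ × SimSt M => okB ι y.1 y.2.2.1 y.2.1) := by
    have hinner : Primrec fun z : (List ℕ × SimSt M) × ((List (Fin k) × A) × Bool) =>
        tAns z.1.1 (qIdx ι z.2.1.1 z.1.2.2.1) :=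
      htAns.comp (fst.comp fst)
        (hqIdx.comp (fst.comp (fst.comp snd)) (fst.comp (snd.comp (snd.comp fst))))
    have hh : Primrec₂ fun (y : List ℕ × SimSt M) (p : (List (Fin k) × A) × Bool) =>
        p.2 && !(tAns y.1 (qIdx ι p.1.1 y.2.2.1) == 2) :=
      ((Primrec₂.comp (dom_bool₂ (· && ·)) (snd.comp snd)
        ((dom_bool Bool.not).comp (Primrec₂.comp Primrec.beq hinner (const 2))))).to₂
    exact (Primrec.list_foldr (fst.comp snd) (const true) hh).of_eq fun y => rfl
  -- read symbol
  have ha0 : Primrec (fun y : List ℕ × SimSt M =>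
      (findB (fun e => tAns y.1 (qIdx ι e.1 y.2.2.1) == 1) y.2.1).getD M.blank) := by
    have hinner : Primrec fun z : (List ℕ × SimSt M) × ((List (Fin k) × A) × Option A) =>
        tAns z.1.1 (qIdx ι z.2.1.1 z.1.2.2.1) :=
      htAns.comp (fst.comp fst)
        (hqIdx.comp (fst.comp (fst.comp snd)) (fst.comp (snd.comp (snd.comp fst))))
    have hh : Primrec₂ fun (y : List ℕ × SimSt M) (p : (List (Fin k) × A) × Option A) =>
        bif tAns y.1 (qIdx ι p.1.1 y.2.2.1) == 1 then some p.1.2 else p.2 :=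
      (Primrec.cond (Primrec₂.comp Primrec.beq hinner (const 1))
        (option_some.comp (snd.comp (fst.comp snd))) (snd.comp snd)).to₂
    have hfind : Primrec fun y : List ℕ × SimSt M =>
        findB (fun e => tAns y.1 (qIdx ι e.1 y.2.2.1) == 1) y.2.1 :=
      (Primrec.list_foldr (fst.comp snd) (const (none : Option A)) hh).of_eq fun y => rfl
    exact Primrec₂.comp Primrec.option_getD hfind (const M.blank)
  have hr : Primrec fun y : List ℕ × SimSt M =>
      dstep M ((findB (fun e => tAns y.1 (qIdx ι e.1 y.2.2.1) == 1) y.2.1).getD M.blank,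
        y.2.2.2) :=
    (dom_finite (dstep M)).comp (ha0.pair (snd.comp (snd.comp snd)))
  have hnew : Primrec fun y : List ℕ × SimSt M =>
      ((y.2.2.1, (dstep M ((findB (fun e => tAns y.1 (qIdx ι e.1 y.2.2.1) == 1)
          y.2.1).getD M.blank, y.2.2.2)).1) :: y.2.1,
        y.2.2.1 ++ [(dstep M ((findB (fun e => tAns y.1 (qIdx ι e.1 y.2.2.1) == 1)
          y.2.1).getD M.blank, y.2.2.2)).2.2],
        (dstep M ((findB (fun e => tAns y.1 (qIdx ι e.1 y.2.2.1) == 1)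
          y.2.1).getD M.blank, y.2.2.2)).2.1) := by
    have hhead : Primrec fun y : List ℕ × SimSt M => y.2.2.1 := fst.comp (snd.comp snd)
    have htape : Primrec fun y : List ℕ × SimSt M => y.2.1 := fst.comp snd
    exact (Primrec₂.comp Primrec.list_cons (hhead.pair (fst.comp hr)) htape).pair
      ((Primrec₂.comp Primrec.list_concat hhead (snd.comp (snd.comp hr))).pair
        (fst.comp (snd.comp hr)))
  -- the core step on non-aborted states
  have hcore : Primrec fun y : List ℕ × SimSt M =>
      ((bif okB ι y.1 y.2.2.1 y.2.1 then
          some ((y.2.2.1, (dstep M ((findB (fun e => tAns y.1 (qIdx ι e.1 y.2.2.1) == 1)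
              y.2.1).getD M.blank, y.2.2.2)).1) :: y.2.1,
            y.2.2.1 ++ [(dstep M ((findB (fun e => tAns y.1 (qIdx ι e.1 y.2.2.1) == 1)
              y.2.1).getD M.blank, y.2.2.2)).2.2],
            (dstep M ((findB (fun e => tAns y.1 (qIdx ι e.1 y.2.2.1) == 1)
              y.2.1).getD M.blank, y.2.2.2)).2.1)
        else none),
        okB ι y.1 y.2.2.1 y.2.1 &&
          qfB M (dstep M ((findB (fun e => tAns y.1 (qIdx ι e.1 y.2.2.1) == 1)
            y.2.1).getD M.blank, y.2.2.2)).2.1) :=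
    (Primrec.cond hok (option_some.comp hnew) (const none)).pair
      (Primrec₂.comp (dom_bool₂ (· && ·)) hok
        ((dom_finite (qfB M)).comp (fst.comp (snd.comp hr))))
  -- assemble with the option case split
  have hcoreC : Primrec fun z : (List ℕ × (Option (SimSt M) × Bool)) × SimSt M =>
      (fun y : List ℕ × SimSt M =>
        ((bif okB ι y.1 y.2.2.1 y.2.1 then
            some ((y.2.2.1, (dstep M ((findB (fun e => tAns y.1 (qIdx ι e.1 y.2.2.1) == 1)
                y.2.1).getD M.blank, y.2.2.2)).1) :: y.2.1,
              y.2.2.1 ++ [(dstep M ((findB (fun e => tAns y.1 (qIdx ι e.1 y.2.2.1) == 1)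
                y.2.1).getD M.blank, y.2.2.2)).2.2],
              (dstep M ((findB (fun e => tAns y.1 (qIdx ι e.1 y.2.2.1) == 1)
                y.2.1).getD M.blank, y.2.2.2)).2.1)
          else none),
          okB ι y.1 y.2.2.1 y.2.1 &&
            qfB M (dstep M ((findB (fun e => tAns y.1 (qIdx ι e.1 y.2.2.1) == 1)
              y.2.1).getD M.blank, y.2.2.2)).2.1)) (z.1.1, z.2) :=
    hcore.comp ((fst.comp fst).pair snd)
  have hg : Primrec₂ fun (w : List ℕ × (Option (SimSt M) × Bool)) (s : SimSt M) =>
      (((fun y : List ℕ × SimSt M =>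
        ((bif okB ι y.1 y.2.2.1 y.2.1 then
            some ((y.2.2.1, (dstep M ((findB (fun e => tAns y.1 (qIdx ι e.1 y.2.2.1) == 1)
                y.2.1).getD M.blank, y.2.2.2)).1) :: y.2.1,
              y.2.2.1 ++ [(dstep M ((findB (fun e => tAns y.1 (qIdx ι e.1 y.2.2.1) == 1)
                y.2.1).getD M.blank, y.2.2.2)).2.2],
              (dstep M ((findB (fun e => tAns y.1 (qIdx ι e.1 y.2.2.1) == 1)
                y.2.1).getD M.blank, y.2.2.2)).2.1)
          else none),
          okB ι y.1 y.2.2.1 y.2.1 &&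
            qfB M (dstep M ((findB (fun e => tAns y.1 (qIdx ι e.1 y.2.2.1) == 1)
              y.2.1).getD M.blank, y.2.2.2)).2.1)) (w.1, s)).1,
        w.2.2 || ((fun y : List ℕ × SimSt M =>
        ((bif okB ι y.1 y.2.2.1 y.2.1 then
            some ((y.2.2.1, (dstep M ((findB (fun e => tAns y.1 (qIdx ι e.1 y.2.2.1) == 1)
                y.2.1).getD M.blank, y.2.2.2)).1) :: y.2.1,
              y.2.2.1 ++ [(dstep M ((findB (fun e => tAns y.1 (qIdx ι e.1 y.2.2.1) == 1)
                y.2.1).getD M.blank, y.2.2.2)).2.2],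
              (dstep M ((findB (fun e => tAns y.1 (qIdx ι e.1 y.2.2.1) == 1)
                y.2.1).getD M.blank, y.2.2.2)).2.1)
          else none),
          okB ι y.1 y.2.2.1 y.2.1 &&
            qfB M (dstep M ((findB (fun e => tAns y.1 (qIdx ι e.1 y.2.2.1) == 1)
              y.2.1).getD M.blank, y.2.2.2)).2.1)) (w.1, s)).2) :=
    ((fst.comp hcoreC).pair
      (Primrec₂.comp (dom_bool₂ (· || ·)) (snd.comp (snd.comp fst)) (snd.comp hcoreC))).to₂
  refine (Primrec.option_casesOn (fst.comp snd) ((const none).pair (snd.comp snd)) hg).of_eq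
    fun w => ?_
  rcases w with ⟨t, os, b⟩
  rcases os with - | s
  · rfl
  · cases hok' : okB ι t s.2.1 s.1 <;>
      simp [tstep, hok']

open Primrec in
theorem primrec_runT :
    Primrec fun x : (PatternCoding k A × ℕ) × List ℕ => runT M ι x.2 x.1.1 x.1.2 := by
  have hg : Primrec fun x : (PatternCoding k A × ℕ) × List ℕ =>
      ((some (x.1.1, ([] : List (Fin k)), eQ M M.q0) : Option (SimSt M)),
        qfB M (eQ M M.q0)) :=
    (option_some.comp ((fst.comp fst).pair (const (([] : List (Fin k)), eQ M M.q0)))).pair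
      (const (qfB M (eQ M M.q0)))
  have hh : Primrec₂ fun (x : (PatternCoding k A × ℕ) × List ℕ)
      (p : ℕ × (Option (SimSt M) × Bool)) => tstep M ι x.2 p.2 :=
    ((primrec_tstep M ι).comp ((snd.comp fst).pair (snd.comp snd))).to₂
  exact (Primrec.nat_rec' (snd.comp fst) hg hh).of_eq fun x => rfl

/-- The total search function: decode a coding and a table, run the simulation. -/
def Vfn (u : ℕ) : ℕ :=
  Option.casesOn (Encodable.decode (α := PatternCoding k A) u.unpair.1.unpair.1) 1 fun c =>
    Option.casesOn (Encodable.decode (α := List ℕ) u.unpair.2) 1 fun t =>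
      bif (runT M ι t c u.unpair.1.unpair.2).2 then 0 else 1

open Primrec in
theorem primrec_Vfn : Primrec (Vfn M ι) := by
  have hb : Primrec fun z : (ℕ × PatternCoding k A) × List ℕ =>
      (bif (runT M ι z.2 z.1.2 z.1.1.unpair.1.unpair.2).2 then 0 else 1 : ℕ) := by
    have hrun : Primrec fun z : (ℕ × PatternCoding k A) × List ℕ =>
        runT M ι z.2 z.1.2 z.1.1.unpair.1.unpair.2 :=
      (primrec_runT M ι).comp
        (((snd.comp fst).pair ((snd.comp Primrec.unpair).comp
          ((fst.comp Primrec.unpair).comp (fst.comp fst)))).pair snd)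
    exact Primrec.cond (snd.comp hrun) (const 0) (const 1)
  have hinner : Primrec₂ fun (u : ℕ) (c : PatternCoding k A) =>
      (Option.casesOn (Encodable.decode (α := List ℕ) u.unpair.2) 1 fun t =>
        (bif (runT M ι t c u.unpair.1.unpair.2).2 then 0 else 1 : ℕ) : ℕ) :=
    (Primrec.option_casesOn
      (Primrec.decode.comp ((snd.comp Primrec.unpair).comp fst))
      (const 1) (hb.to₂)).to₂
  exact (Primrec.option_casesOn
    (Primrec.decode.comp ((fst.comp Primrec.unpair).comp (fst.comp Primrec.unpair)))
    (const 1) hinner).of_eq fun u => rfl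

theorem Vfn_pair_none {x : ℕ} (hdec : (Encodable.decode x : Option (PatternCoding k A)) = none)
    (n : ℕ) (t : List ℕ) :
    Vfn M ι (Nat.pair (Nat.pair x n) (Encodable.encode t)) = 1 := by
  simp [Vfn, Nat.unpair_pair, hdec]

theorem Vfn_pair_some {x : ℕ} {c : PatternCoding k A}
    (hdec : (Encodable.decode x : Option (PatternCoding k A)) = some c) (n : ℕ) (t : List ℕ) :
    Vfn M ι (Nat.pair (Nat.pair x n) (Encodable.encode t)) =
      bif (runT M ι t c n).2 then 0 else 1 := by
  simp [Vfn, Nat.unpair_pair, hdec, Encodable.encodek]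

end Comp

/-! ### Recursive enumerability of the accepted codings -/

section Main
variable {G : Type} [Group G] {k : ℕ} (S : Fin k → G)
variable {A : Type} [Fintype A] [Primcodable A] (M : GMachine k A) (ι : Fin k → Fin k)

theorem Cset_RePredIn : RePredIn (charFun (WP S)) (· ∈ Cset S M ι) := by
  have hfb : NatPartrecIn (charFun (WP S)) fun z : ℕ =>
      Part.some (Vfn M ι (Nat.pair z (Encodable.encode (oListR (wpω S) z.unpair.2)))) := by
    rw [charFun_WP_eq S]
    refine ((NatPartrecIn.comp
      (.of_partrec (Partrec.nat_iff.1 (primrec_Vfn M ι).to_comp))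
      ((NatPartrecIn.of_primrec .id).pair
        (NatPartrecIn.tab.comp_total (Primrec.snd.comp .unpair))))).of_eq fun z => ?_
    simp [Seq.seq]
    exact Part.bind_some _ _
  have key : NatPartrecIn (charFun (WP S)) fun x =>
      (Nat.rfind fun n => (fun m : ℕ => m = 0) <$>
        (fun z : ℕ => Part.some (Vfn M ι
          (Nat.pair z (Encodable.encode (oListR (wpω S) z.unpair.2))))) (Nat.pair x n)) >>=
        ((pure 0 : ℕ →. ℕ)) :=
    NatPartrecIn.comp .zero (NatPartrecIn.rfind hfb)
  refine key.of_eq fun x => ?_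
  rcases hdec : (Encodable.decode x : Option (PatternCoding k A)) with - | c
  · apply Part.ext
    intro a
    constructor
    · intro ha
      obtain ⟨y, hy, -⟩ := Part.mem_bind_iff.1 ha
      have hspec := Nat.rfind_spec hy
      simp only [Nat.unpair_pair, Part.map_eq_map, Part.map_some, Part.mem_some_iff,
        Vfn_pair_none M ι hdec] at hspec
      simp at hspec
    · intro ha
      obtain ⟨b, hb, -⟩ := Part.mem_bind_iff.1 ha
      simp [Part.mem_ofOption] at hb
  · apply Part.ext
    intro a
    constructor
    · intro ha
      obtain ⟨y, hy, ha0⟩ := Part.mem_bind_iff.1 ha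
      have hspec := Nat.rfind_spec hy
      simp only [Nat.unpair_pair, Part.map_eq_map, Part.map_some, Part.mem_some_iff,
        Vfn_pair_some M ι hdec] at hspec
      have hacc : (runT M ι (oListR (wpω S) y) c y).2 = true := by
        cases hrb : (runT M ι (oListR (wpω S) y) c y).2
        · rw [hrb] at hspec; simp at hspec
        · rfl
      have ha0' : a = 0 := Part.mem_some_iff.1 ha0
      refine Part.mem_bind_iff.2 ⟨c, Part.mem_ofOption.2 rfl, ?_⟩
      refine (Part.mem_map_iff _).2 ⟨(), Part.mem_assert_iff.2 ⟨⟨y, hacc⟩, Part.mem_some _⟩, ?_⟩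
      simp [ha0']
    · intro ha
      obtain ⟨b, hb, hab⟩ := Part.mem_bind_iff.1 ha
      have hbc : b = c := by simpa using hb
      rw [hbc] at hab
      obtain ⟨u, hu, hau⟩ := (Part.mem_map_iff _).1 hab
      obtain ⟨hC, -⟩ := Part.mem_assert_iff.1 hu
      obtain ⟨m, hm⟩ := hC
      have ha0 : a = 0 := by
        rw [← hau]; rfl
      have htrue : true ∈ ((fun m : ℕ => (decide (m = 0) : Bool)) <$>
          (fun z : ℕ => Part.some (Vfn M ι
            (Nat.pair z (Encodable.encode (oListR (wpω S) z.unpair.2))))) (Nat.pair x m)) := by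
        simp only [Nat.unpair_pair, Part.map_eq_map, Part.map_some, Part.mem_some_iff,
          Vfn_pair_some M ι hdec]
        rw [show (runT M ι (oListR (wpω S) m) c m).2 = true from hm]
        simp
      have hdom : (Nat.rfind fun n => (fun m : ℕ => (decide (m = 0) : Bool)) <$>
          (fun z : ℕ => Part.some (Vfn M ι
            (Nat.pair z (Encodable.encode (oListR (wpω S) z.unpair.2))))) (Nat.pair x n)).Dom :=
        Nat.rfind_dom.2 ⟨m, htrue, fun _ => by simp⟩
      refine Part.mem_bind_iff.2 ⟨_, Part.get_mem hdom, ?_⟩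
      rw [ha0]
      exact Part.mem_some 0
end Main


/-- A `G`-recursively enumerable set of patterns is the set of patterns of a
set of pattern codings which is recursively enumerable with oracle the word problem. -/
theorem gRecEnum_to_oracle_codings
    {G : Type} [Group G] {k : ℕ} (S : Fin k → G) (hS : IsGenData S)
    {A : Type} [Fintype A] [Primcodable A]
    (L : Set (Pattern G A)) (hL : GRecEnum S L) :
    ∃ C : Set (PatternCoding k A),
      RePredIn (charFun (WP S)) (· ∈ C) ∧ patternsOf S C = L := by
  obtain ⟨M, hM⟩ := hL
  obtain ⟨ι, hι⟩ := Classical.axiomOfChoice hS.2.1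
  exact ⟨Cset S M ι, Cset_RePredIn S M ι, patternsOf_Cset S M ι hS hι hM⟩

end SDG
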